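/- arXiv:2005.07166 — 4 statements merged into one kernel-verified Lean document; each statement's English description precedes it below -/
import Mathlib

section
/- Contact property of the HLLC flux (Lemma 2.6): if ρ_L > 0, ρ_R > 0, p > 0, and U_L = (ρ_L, 0, p/(γ−1)), U_R = (ρ_R, 0, p/(γ−1)), then F^hllc(U_L, U_R) = (0, p, 0). -/
noncomputable section

/-- A 1D state `U = (ρ, m, E)`. -/
abbrev St : Type := ℝ × ℝ × ℝ

/-- The admissible set `G = {(ρ, m, E) : ρ > 0, E − m²/(2ρ) > 0}`. -/
def admG : Set St := {U | 0 < U.1 ∧ 0 < U.2.2 - U.2.1 ^ 2 / (2 * U.1)}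

/-- The velocity `u = m/ρ`. -/
def vel (U : St) : ℝ := U.2.1 / U.1

/-- The pressure `p = (γ−1)(E − m²/(2ρ))`. -/
def press (γ : ℝ) (U : St) : ℝ := (γ - 1) * (U.2.2 - U.2.1 ^ 2 / (2 * U.1))

/-- The sound speed `√(γ p / ρ)`. -/
def sound (γ : ℝ) (U : St) : ℝ := Real.sqrt (γ * press γ U / U.1)

/-- The specific internal energy `e = (E − m²/(2ρ))/ρ`. -/
def specE (U : St) : ℝ := (U.2.2 - U.2.1 ^ 2 / (2 * U.1)) / U.1

/-- The Euler flux `F(U) = (ρu, ρu² + p, (E+p)u)`. -/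
def eulerF (γ : ℝ) (U : St) : St :=
  (U.1 * vel U, U.1 * vel U ^ 2 + press γ U, (U.2.2 + press γ U) * vel U)

/-- `α₋(U) = u − √(γp/ρ)`. -/
def alphaMinus (γ : ℝ) (U : St) : ℝ := vel U - sound γ U

/-- `α₊(U) = u + √(γp/ρ)`. -/
def alphaPlus (γ : ℝ) (U : St) : ℝ := vel U + sound γ U

/-- `α_max(U) = |u| + √(γp/ρ)`. -/
def alphaMax (γ : ℝ) (U : St) : ℝ := |vel U| + sound γ U

/-- Left wave speed `S_L = min(α₋(U_L), α₋(U_R))`. -/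
def SL (γ : ℝ) (UL UR : St) : ℝ := min (alphaMinus γ UL) (alphaMinus γ UR)

/-- Right wave speed `S_R = max(α₊(U_L), α₊(U_R))`. -/
def SR (γ : ℝ) (UL UR : St) : ℝ := max (alphaPlus γ UL) (alphaPlus γ UR)

/-- Middle wave speed `S_*`. -/
def Sstar (γ : ℝ) (UL UR : St) : ℝ :=
  (press γ UR - press γ UL + UL.1 * vel UL * (SL γ UL UR - vel UL)
      - UR.1 * vel UR * (SR γ UL UR - vel UR)) /
    (UL.1 * (SL γ UL UR - vel UL) - UR.1 * (SR γ UL UR - vel UR))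

/-- HLLC intermediate state
`U_{*i} = ρ_i (S_i − u_i)/(S_i − S_*) · (1, S_*, E_i/ρ_i + (S_* − u_i)(S_* + p_i/(ρ_i(S_i − u_i))))`. -/
def Ustar (γ : ℝ) (Si Sst : ℝ) (Ui : St) : St :=
  (Ui.1 * ((Si - vel Ui) / (Si - Sst))) •
    (((1 : ℝ), Sst,
      Ui.2.2 / Ui.1 + (Sst - vel Ui) * (Sst + press γ Ui / (Ui.1 * (Si - vel Ui)))) : St)

/-- Intermediate flux `F_{*i} = F(U_i) + S_i (U_{*i} − U_i)`. -/
def Fstar (γ : ℝ) (Si Sst : ℝ) (Ui : St) : St :=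
  eulerF γ Ui + Si • (Ustar γ Si Sst Ui - Ui)

/-- The HLLC numerical flux. -/
def Fhllc (γ : ℝ) (UL UR : St) : St :=
  if 0 ≤ SL γ UL UR then eulerF γ UL
  else if 0 ≤ Sstar γ UL UR then Fstar γ (SL γ UL UR) (Sstar γ UL UR) UL
  else if 0 ≤ SR γ UL UR then Fstar γ (SR γ UL UR) (Sstar γ UL UR) UR
  else eulerF γ UR

end

/-- Lemma 2.6: contact property of the HLLC flux. -/
theorem hllc_contact (γ : ℝ) (hγ : 1 < γ) (ρL ρR p : ℝ)
    (hρL : 0 < ρL) (hρR : 0 < ρR) (hp : 0 < p) :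
    Fhllc γ (ρL, 0, p / (γ - 1)) (ρR, 0, p / (γ - 1)) = ((0 : ℝ), p, (0 : ℝ)) := by
  have hγ1 : γ - 1 ≠ 0 := by linarith
  have hγ0 : 0 < γ := by linarith
  set UL : St := (ρL, 0, p / (γ - 1)) with hUL
  set UR : St := (ρR, 0, p / (γ - 1)) with hUR
  have hvL : vel UL = 0 := by simp [vel, hUL]
  have hvR : vel UR = 0 := by simp [vel, hUR]
  have hpL : press γ UL = p := by
    simp [press, hUL]; field_simp
  have hpR : press γ UR = p := by
    simp [press, hUR]; field_simp
  have hcL : 0 < sound γ UL := by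
    apply Real.sqrt_pos.mpr; rw [hpL]; positivity
  have hcR : 0 < sound γ UR := by
    apply Real.sqrt_pos.mpr; rw [hpR]; positivity
  have hSL : SL γ UL UR < 0 := by
    rw [SL, alphaMinus, alphaMinus, hvL, hvR]
    simp only [zero_sub]
    exact lt_of_le_of_lt (min_le_left _ _) (by linarith)
  have hSR : 0 < SR γ UL UR := by
    rw [SR, alphaPlus, alphaPlus, hvL, hvR]
    simp only [zero_add]
    exact lt_max_of_lt_left hcL
  have hSst : Sstar γ UL UR = 0 := by
    rw [Sstar, hvL, hvR, hpL, hpR]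
    simp
  rw [Fhllc, if_neg (by linarith), if_pos (by rw [hSst])]
  rw [Fstar, hSst]
  have hUst : Ustar γ (SL γ UL UR) 0 UL = UL := by
    rw [Ustar, hvL, hpL]
    have : (SL γ UL UR - 0) / (SL γ UL UR - 0) = 1 := by
      rw [div_self]; intro h; rw [sub_zero] at h; rw [h] at hSL; exact lt_irrefl 0 hSL
    rw [this]
    have hρ : ρL ≠ 0 := ne_of_gt hρL
    simp [hUL, Prod.smul_def, smul_eq_mul]
    field_simp
  rw [hUst]
  simp only [sub_self, smul_zero, add_zero]
  rw [eulerF, hvL, hpL]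
  simp [hUL]
end

section
/- Positivity of the HLLC intermediate states (Lemma 2.7): for any two admissible states U_L ∈ G and U_R ∈ G, the HLLC intermediate states satisfy U_{*L} ∈ G and U_{*R} ∈ G. -/
section AuxProofs

open Real

private lemma key_pos (γ ρ eI u p Si Sst : ℝ) (hγ : 1 < γ) (hρ : 0 < ρ) (heI : 0 < eI)
    (hp : p = (γ - 1) * eI)
    (hsign : 0 < (Si - u) * (Si - Sst))
    (hd2 : γ * p ≤ ρ * (Si - u) ^ 2) :
    0 < (eI / ρ + u ^ 2 / 2) + (Sst - u) * (Sst + p / (ρ * (Si - u))) - Sst ^ 2 / 2 := by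
  have hd : Si - u ≠ 0 := by
    rcases mul_pos_iff.mp hsign with ⟨h, _⟩ | ⟨h, _⟩
    · exact ne_of_gt h
    · exact ne_of_lt h
  have hppos : 0 < p := by
    have : 0 < γ - 1 := by linarith
    rw [hp]; exact mul_pos this heI
  set k := p / (ρ * (Si - u)) with hk
  have hkk : k * (ρ * (Si - u)) = p := div_mul_cancel₀ _ (mul_ne_zero hρ.ne' hd)
  set A := eI / ρ with hA
  have hAρ : A * ρ = eI := div_mul_cancel₀ _ hρ.ne'
  have hApos : 0 < A := div_pos heI hρ
  have hpk : γ * (ρ * k ^ 2) ≤ p := by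
    nlinarith [mul_le_mul_of_nonneg_left hd2 (mul_nonneg (sq_nonneg k) hρ.le), hkk, hppos]
  have hkA : k ^ 2 ≤ A := by
    nlinarith [mul_pos (show (0:ℝ) < γ - 1 by linarith) hρ,
      mul_nonneg hρ.le (sq_nonneg k), hAρ, hp, hpk]
  nlinarith [sq_nonneg (Sst - u + k), hkA, hApos]

private lemma ustar_mem (γ Si Sst : ℝ) (U : St) (hγ : 1 < γ) (hU : U ∈ admG)
    (hsign : 0 < (Si - vel U) * (Si - Sst))
    (hd2 : γ * press γ U ≤ U.1 * (Si - vel U) ^ 2) :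
    Ustar γ Si Sst U ∈ admG := by
  obtain ⟨hρ, he⟩ := hU
  have hd : Si - vel U ≠ 0 := by
    rcases mul_pos_iff.mp hsign with ⟨h, _⟩ | ⟨h, _⟩
    · exact ne_of_gt h
    · exact ne_of_lt h
  have hs : Si - Sst ≠ 0 := by
    rcases mul_pos_iff.mp hsign with ⟨_, h⟩ | ⟨_, h⟩
    · exact ne_of_gt h
    · exact ne_of_lt h
  have hq : 0 < (Si - vel U) / (Si - Sst) := by
    rw [div_pos_iff]; exact mul_pos_iff.mp hsign
  have hrpos : 0 < U.1 * ((Si - vel U) / (Si - Sst)) := mul_pos hρ hq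
  have key := key_pos γ U.1 (U.2.2 - U.2.1 ^ 2 / (2 * U.1)) (vel U) (press γ U) Si Sst hγ hρ he
    rfl hsign hd2
  have hEρ : U.2.2 / U.1 = (U.2.2 - U.2.1 ^ 2 / (2 * U.1)) / U.1 + (vel U) ^ 2 / 2 := by
    rw [vel]; field_simp; ring
  have hX : 0 < U.2.2 / U.1 + (Sst - vel U) * (Sst + press γ U / (U.1 * (Si - vel U)))
      - Sst ^ 2 / 2 := by rw [hEρ]; linarith [key]
  set r := U.1 * ((Si - vel U) / (Si - Sst)) with hr
  set X := U.2.2 / U.1 + (Sst - vel U) * (Sst + press γ U / (U.1 * (Si - vel U))) with hXdef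
  have hcomp : Ustar γ Si Sst U = (r * 1, r * Sst, r * X) := rfl
  constructor
  · rw [hcomp]; simpa using hrpos
  · rw [hcomp]
    show 0 < r * X - (r * Sst) ^ 2 / (2 * (r * 1))
    have hcalc : r * X - (r * Sst) ^ 2 / (2 * (r * 1)) = r * (X - Sst ^ 2 / 2) := by
      field_simp
    rw [hcalc]
    exact mul_pos hrpos (by linarith [hX])

end AuxProofs

set_option maxHeartbeats 1600000 in
/-- Lemma 2.7: positivity of the HLLC intermediate states. -/
theorem hllc_intermediate_states_admissible (γ : ℝ) (hγ : 1 < γ)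
    (UL UR : St) (hUL : UL ∈ admG) (hUR : UR ∈ admG) :
    Ustar γ (SL γ UL UR) (Sstar γ UL UR) UL ∈ admG ∧
      Ustar γ (SR γ UL UR) (Sstar γ UL UR) UR ∈ admG := by
  obtain ⟨hρL, heL⟩ := hUL
  obtain ⟨hρR, heR⟩ := hUR
  have hγ1 : 0 < γ - 1 := by linarith
  have hpL : 0 < press γ UL := mul_pos hγ1 heL
  have hpR : 0 < press γ UR := mul_pos hγ1 heR
  have hcL2 : sound γ UL ^ 2 = γ * press γ UL / UL.1 := Real.sq_sqrt (by positivity)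
  have hcR2 : sound γ UR ^ 2 = γ * press γ UR / UR.1 := Real.sq_sqrt (by positivity)
  have hcL : 0 < sound γ UL := Real.sqrt_pos.mpr (by positivity)
  have hcR : 0 < sound γ UR := Real.sqrt_pos.mpr (by positivity)
  have hρcL : UL.1 * sound γ UL ^ 2 = γ * press γ UL := by
    rw [hcL2]; field_simp
  have hρcR : UR.1 * sound γ UR ^ 2 = γ * press γ UR := by
    rw [hcR2]; field_simp
  have hSL1 : SL γ UL UR ≤ vel UL - sound γ UL := min_le_left _ _
  have hSL2 : SL γ UL UR ≤ vel UR - sound γ UR := min_le_right _ _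
  have hSR1 : vel UL + sound γ UL ≤ SR γ UL UR := le_max_left _ _
  have hSR2 : vel UR + sound γ UR ≤ SR γ UL UR := le_max_right _ _
  have hdL : SL γ UL UR - vel UL < 0 := by linarith
  have hdR : 0 < SR γ UL UR - vel UR := by linarith
  have hd2L : γ * press γ UL ≤ UL.1 * (SL γ UL UR - vel UL) ^ 2 := by
    have h1 : 0 ≤ vel UL - SL γ UL UR - sound γ UL := by linarith
    have h2 : 0 ≤ vel UL - SL γ UL UR + sound γ UL := by linarith
    nlinarith [mul_nonneg (mul_nonneg hρL.le h1) h2, hρcL]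
  have hd2R : γ * press γ UR ≤ UR.1 * (SR γ UL UR - vel UR) ^ 2 := by
    have h1 : 0 ≤ SR γ UL UR - vel UR - sound γ UR := by linarith
    have h2 : 0 ≤ SR γ UL UR - vel UR + sound γ UR := by linarith
    nlinarith [mul_nonneg (mul_nonneg hρR.le h1) h2, hρcR]
  have hD : UL.1 * (SL γ UL UR - vel UL) - UR.1 * (SR γ UL UR - vel UR) < 0 := by
    have h1 : UL.1 * (SL γ UL UR - vel UL) < 0 := mul_neg_of_pos_of_neg hρL hdL
    have h2 : 0 < UR.1 * (SR γ UL UR - vel UR) := mul_pos hρR hdR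
    linarith
  have hcrossR : γ * press γ UR ≤ UR.1 * (SR γ UL UR - vel UR) * (vel UR - SL γ UL UR) := by
    have h1 : 0 ≤ SR γ UL UR - vel UR - sound γ UR := by linarith
    have h2 : 0 ≤ vel UR - SL γ UL UR - sound γ UR := by linarith
    nlinarith [mul_nonneg (mul_nonneg hρR.le h1) h2,
      mul_nonneg (mul_nonneg hρR.le hcR.le) h1,
      mul_nonneg (mul_nonneg hρR.le hcR.le) h2, hρcR]
  have hcrossL : γ * press γ UL ≤ UL.1 * (SL γ UL UR - vel UL) * (vel UL - SR γ UL UR) := by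
    have h1 : 0 ≤ vel UL - SL γ UL UR - sound γ UL := by linarith
    have h2 : 0 ≤ SR γ UL UR - vel UL - sound γ UL := by linarith
    nlinarith [mul_nonneg (mul_nonneg hρL.le h1) h2,
      mul_nonneg (mul_nonneg hρL.le hcL.le) h1,
      mul_nonneg (mul_nonneg hρL.le hcL.le) h2, hρcL]
  have hsdef : Sstar γ UL UR =
      (press γ UR - press γ UL + UL.1 * vel UL * (SL γ UL UR - vel UL)
        - UR.1 * vel UR * (SR γ UL UR - vel UR)) /
      (UL.1 * (SL γ UL UR - vel UL) - UR.1 * (SR γ UL UR - vel UR)) := rfl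
  have hSLlt : SL γ UL UR < Sstar γ UL UR := by
    rw [hsdef, lt_div_iff_of_neg hD]
    nlinarith [hd2L, hcrossR, hpL, hpR]
  have hSRgt : Sstar γ UL UR < SR γ UL UR := by
    rw [hsdef, div_lt_iff_of_neg hD]
    nlinarith [hd2R, hcrossL, hpL, hpR]
  constructor
  · exact ustar_mem γ (SL γ UL UR) (Sstar γ UL UR) UL hγ ⟨hρL, heL⟩
      (mul_pos_of_neg_of_neg hdL (by linarith)) hd2L
  · exact ustar_mem γ (SR γ UL UR) (Sstar γ UL UR) UR hγ ⟨hρR, heR⟩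
      (mul_pos hdR (by linarith)) hd2R
end

section
/- Three-state HLLC positivity (Lemma 2.9): for any three admissible states U_L, U_M, U_R ∈ G and any λ > 0 satisfying λ · max{α_max(U_L), α_max(U_M), α_max(U_R)} ≤ 1/2, one has U_M − λ(F^hllc(U_M, U_R) − F^hllc(U_L, U_M)) ∈ G. -/
set_option linter.unusedSectionVars false

namespace HLLCAux

lemma mem_admG_iff (U : St) : U ∈ admG ↔ 0 < U.1 ∧ U.2.1 ^ 2 < 2 * U.1 * U.2.2 := by
  constructor
  · rintro ⟨h1, h2⟩
    refine ⟨h1, ?_⟩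
    have h2ρ : 0 < 2 * U.1 := by linarith
    rw [sub_pos, div_lt_iff₀ h2ρ] at h2
    nlinarith
  · rintro ⟨h1, h2⟩
    refine ⟨h1, ?_⟩
    have h2ρ : 0 < 2 * U.1 := by linarith
    rw [sub_pos, div_lt_iff₀ h2ρ]
    nlinarith

lemma admG_add {A B : St} (hA : A ∈ admG) (hB : B ∈ admG) : A + B ∈ admG := by
  rw [mem_admG_iff] at *
  obtain ⟨ha1, ha2⟩ := hA
  obtain ⟨hb1, hb2⟩ := hB
  refine ⟨by simpa using by positivity, ?_⟩
  show (A.2.1 + B.2.1) ^ 2 < 2 * (A.1 + B.1) * (A.2.2 + B.2.2)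
  nlinarith [sq_nonneg (A.2.1 * B.1 - B.2.1 * A.1), mul_pos ha1 hb1,
    mul_lt_mul_of_pos_right ha2 hb1, mul_lt_mul_of_pos_right hb2 ha1]

lemma admG_smul {c : ℝ} (hc : 0 < c) {A : St} (hA : A ∈ admG) : c • A ∈ admG := by
  rw [mem_admG_iff] at *
  obtain ⟨ha1, ha2⟩ := hA
  refine ⟨by simpa using by positivity, ?_⟩
  show (c * A.2.1) ^ 2 < 2 * (c * A.1) * (c * A.2.2)
  nlinarith [mul_lt_mul_of_pos_left ha2 (mul_pos hc hc)]

lemma admG_add_smul {A B : St} (hA : A ∈ admG) {c : ℝ} (hc : 0 ≤ c) (hB : B ∈ admG) :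
    A + c • B ∈ admG := by
  rcases eq_or_lt_of_le hc with h | h
  · simpa [← h] using hA
  · exact admG_add hA (admG_smul h hB)

lemma press_pos {γ : ℝ} (hγ : 1 < γ) {U : St} (hU : U ∈ admG) : 0 < press γ U := by
  have := hU.2
  have : (0:ℝ) < γ - 1 := by linarith
  exact mul_pos this hU.2

lemma sound_sq {γ : ℝ} (hγ : 1 < γ) {U : St} (hU : U ∈ admG) :
    sound γ U ^ 2 = γ * press γ U / U.1 := by
  apply Real.sq_sqrt
  have hp := press_pos hγ hU
  have hγ0 : (0:ℝ) < γ := by linarith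
  have hρ := hU.1
  positivity

lemma sound_pos {γ : ℝ} (hγ : 1 < γ) {U : St} (hU : U ∈ admG) : 0 < sound γ U := by
  apply Real.sqrt_pos.2
  have hp := press_pos hγ hU
  have hγ0 : (0:ℝ) < γ := by linarith
  have := hU.1
  positivity

lemma alphaMinus_ge {γ : ℝ} (U : St) : -alphaMax γ U ≤ alphaMinus γ U := by
  have := abs_nonneg (vel U)
  have := neg_abs_le (vel U)
  simp only [alphaMinus, alphaMax]
  linarith

lemma alphaPlus_le {γ : ℝ} (U : St) : alphaPlus γ U ≤ alphaMax γ U := by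
  have := le_abs_self (vel U)
  simp only [alphaPlus, alphaMax]
  linarith

lemma alphaMax_pos {γ : ℝ} (hγ : 1 < γ) {U : St} (hU : U ∈ admG) : 0 < alphaMax γ U := by
  have := sound_pos hγ hU
  have := abs_nonneg (vel U)
  simp only [alphaMax]; linarith

end HLLCAux
namespace HLLCAux

section Interface
variable {γ : ℝ} {UL UR : St}

lemma sound_sq_mul (hγ : 1 < γ) {U : St} (hU : U ∈ admG) :
    sound γ U ^ 2 * U.1 = γ * press γ U := by
  have h1 : U.1 ≠ 0 := ne_of_gt hU.1
  rw [sound_sq hγ hU]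
  field_simp

variable (hγ : 1 < γ) (hUL : UL ∈ admG) (hUR : UR ∈ admG)
include hγ hUL hUR

lemma den_neg : UL.1 * (SL γ UL UR - vel UL) - UR.1 * (SR γ UL UR - vel UR) < 0 := by
  have h1 : SL γ UL UR ≤ vel UL - sound γ UL := min_le_left _ _
  have h3 : vel UR + sound γ UR ≤ SR γ UL UR := le_max_right _ _
  have hcL := sound_pos hγ hUL
  have hcR := sound_pos hγ hUR
  have hρL := hUL.1
  have hρR := hUR.1
  nlinarith [mul_pos hρL hcL, mul_pos hρR hcR]

lemma SL_lt_Sstar : SL γ UL UR < Sstar γ UL UR := by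
  have h1 : SL γ UL UR ≤ vel UL - sound γ UL := min_le_left _ _
  have h2 : SL γ UL UR ≤ vel UR - sound γ UR := min_le_right _ _
  have h4 : vel UR + sound γ UR ≤ SR γ UL UR := le_max_right _ _
  have hcL := sound_pos hγ hUL
  have hcR := sound_pos hγ hUR
  have hρL := hUL.1
  have hρR := hUR.1
  have hpL := press_pos hγ hUL
  have hpR := press_pos hγ hUR
  have hcLs := sound_sq_mul hγ hUL
  have hcRs := sound_sq_mul hγ hUR
  have hden := den_neg hγ hUL hUR
  have e1 : sound γ UL ≤ vel UL - SL γ UL UR := by linarith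
  have e2 : sound γ UR ≤ SR γ UL UR - vel UR := by linarith
  have e3 : sound γ UR ≤ vel UR - SL γ UL UR := by linarith
  have hA : γ * press γ UL ≤ UL.1 * ((vel UL - SL γ UL UR) * (vel UL - SL γ UL UR)) := by
    nlinarith [mul_le_mul_of_nonneg_left (mul_self_le_mul_self hcL.le e1) hρL.le]
  have hB : γ * press γ UR ≤
      UR.1 * ((SR γ UL UR - vel UR) * (vel UR - SL γ UL UR)) := by
    nlinarith [mul_le_mul_of_nonneg_left
      (mul_le_mul e2 e3 hcR.le (by linarith)) hρR.le]
  rw [Sstar, lt_div_iff_of_neg hden]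
  nlinarith [hA, hB, mul_pos (sub_pos.2 hγ) hpR, mul_pos (sub_pos.2 hγ) hpL]

lemma Sstar_lt_SR : Sstar γ UL UR < SR γ UL UR := by
  have h1 : SL γ UL UR ≤ vel UL - sound γ UL := min_le_left _ _
  have h3 : vel UL + sound γ UL ≤ SR γ UL UR := le_max_left _ _
  have h4 : vel UR + sound γ UR ≤ SR γ UL UR := le_max_right _ _
  have hcL := sound_pos hγ hUL
  have hcR := sound_pos hγ hUR
  have hρL := hUL.1
  have hρR := hUR.1
  have hpL := press_pos hγ hUL
  have hpR := press_pos hγ hUR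
  have hcLs := sound_sq_mul hγ hUL
  have hcRs := sound_sq_mul hγ hUR
  have hden := den_neg hγ hUL hUR
  have e1 : sound γ UL ≤ vel UL - SL γ UL UR := by linarith
  have e4 : sound γ UL ≤ SR γ UL UR - vel UL := by linarith
  have e2 : sound γ UR ≤ SR γ UL UR - vel UR := by linarith
  have hA : γ * press γ UL ≤ UL.1 * ((vel UL - SL γ UL UR) * (SR γ UL UR - vel UL)) := by
    nlinarith [mul_le_mul_of_nonneg_left
      (mul_le_mul e1 e4 hcL.le (by linarith)) hρL.le]
  have hB : γ * press γ UR ≤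
      UR.1 * ((SR γ UL UR - vel UR) * (SR γ UL UR - vel UR)) := by
    nlinarith [mul_le_mul_of_nonneg_left (mul_self_le_mul_self hcR.le e2) hρR.le]
  rw [Sstar, div_lt_iff_of_neg hden]
  nlinarith [hA, hB, mul_pos (sub_pos.2 hγ) hpR, mul_pos (sub_pos.2 hγ) hpL]

end Interface
end HLLCAux
namespace HLLCAux

lemma ustar_mem {γ : ℝ} (hγ : 1 < γ) {U : St} (hU : U ∈ admG) {S s : ℝ}
    (hgap : sound γ U ^ 2 ≤ (S - vel U) ^ 2)
    (hpos : 0 < (S - vel U) / (S - s)) :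
    Ustar γ S s U ∈ admG := by
  obtain ⟨ρ, m, E⟩ := U
  have hρ : 0 < ρ := hU.1
  obtain ⟨u, rfl⟩ : ∃ u, m = u * ρ := ⟨m / ρ, by field_simp⟩
  have hvel : vel (ρ, u * ρ, E) = u := by
    simp only [vel]
    field_simp
  rw [hvel] at hgap hpos
  have he2 : 0 < 2 * E - u ^ 2 * ρ := by
    have h2 := hU.2
    have hx : ((ρ, u * ρ, E) : St).2.2 - ((ρ, u * ρ, E) : St).2.1 ^ 2 / (2 * ((ρ, u * ρ, E) : St).1)
        = E - u ^ 2 * ρ / 2 := by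
      show E - (u * ρ) ^ 2 / (2 * ρ) = _
      field_simp
    rw [hx] at h2
    linarith
  set p := press γ (ρ, u * ρ, E) with hpdef
  have hpe : 2 * p = (γ - 1) * (2 * E - u ^ 2 * ρ) := by
    rw [hpdef]
    show 2 * ((γ - 1) * (E - (u * ρ) ^ 2 / (2 * ρ))) = _
    field_simp
  have hp : 0 < p := press_pos hγ hU
  have hgapρ : γ * p ≤ ρ * (S - u) ^ 2 := by
    have h1 : sound γ (ρ, u * ρ, E) ^ 2 * ρ = γ * p := sound_sq_mul hγ hU
    nlinarith [mul_le_mul_of_nonneg_right hgap hρ.le]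
  have hSs : S - s ≠ 0 := by
    intro h
    rw [h, div_zero] at hpos
    exact lt_irrefl 0 hpos
  have hSu : S - u ≠ 0 := by
    intro h
    rw [h, zero_div] at hpos
    exact lt_irrefl 0 hpos
  have ha : ρ * (S - u) ≠ 0 := mul_ne_zero hρ.ne' hSu
  have hr : 0 < ρ * ((S - u) / (S - s)) := mul_pos hρ hpos
  have hkey : s ^ 2 < 2 * (E / ρ + (s - u) * (s + p / (ρ * (S - u)))) := by
    have hrw : 2 * (E / ρ + (s - u) * (s + p / (ρ * (S - u))))
        = (2 * E * ρ * (S - u) ^ 2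
            + 2 * (s - u) * (s * (ρ * (S - u)) ^ 2 + p * (ρ * (S - u)))) / (ρ * (S - u)) ^ 2 := by
      field_simp
    have hsq : 0 < (ρ * (S - u)) ^ 2 :=
      lt_of_le_of_ne (sq_nonneg _) (Ne.symm (pow_ne_zero 2 ha))
    rw [hrw, lt_div_iff₀ hsq]
    have hq : 4 * ((2 * E - u ^ 2 * ρ) * (γ * p)) - 4 * p ^ 2
        = (γ - 1) * (γ + 1) * (2 * E - u ^ 2 * ρ) ^ 2 := by
      linear_combination (2 * γ * (2 * E - u ^ 2 * ρ) - 2 * p - (γ - 1) * (2 * E - u ^ 2 * ρ)) * hpe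
    nlinarith [sq_nonneg (ρ * (S - u) * (s - u) + p),
      mul_le_mul_of_nonneg_left hgapρ he2.le, hq,
      mul_pos (mul_pos (sub_pos.2 hγ) (show (0:ℝ) < γ + 1 by linarith)) (mul_pos he2 he2)]
  rw [mem_admG_iff]
  simp only [Ustar, hvel, Prod.smul_mk, smul_eq_mul, ← hpdef]
  constructor
  · show 0 < ρ * ((S - u) / (S - s)) * 1
    simpa using hr
  · show (ρ * ((S - u) / (S - s)) * s) ^ 2
      < 2 * (ρ * ((S - u) / (S - s)) * 1) * (ρ * ((S - u) / (S - s)) * (E / ρ + (s - u) * (s + p / (ρ * (S - u)))))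
    nlinarith [mul_lt_mul_of_pos_left hkey (mul_pos hr hr)]

end HLLCAux
namespace HLLCAux

section Cons
variable {γ : ℝ} {UL UR : St} (hγ : 1 < γ) (hUL : UL ∈ admG) (hUR : UR ∈ admG)
include hγ hUL hUR

lemma speed_gap_L : sound γ UL ≤ vel UL - SL γ UL UR := by
  have h1 : SL γ UL UR ≤ vel UL - sound γ UL := min_le_left _ _
  linarith

lemma speed_gap_R : sound γ UR ≤ SR γ UL UR - vel UR := by
  have h1 : vel UR + sound γ UR ≤ SR γ UL UR := le_max_right _ _
  linarith

lemma hK_rel :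
    UL.1 * (SL γ UL UR - vel UL) * (Sstar γ UL UR - vel UL)
      - UR.1 * (SR γ UL UR - vel UR) * (Sstar γ UL UR - vel UR)
      = press γ UR - press γ UL := by
  have hden := (den_neg hγ hUL hUR).ne
  rw [Sstar]
  field_simp
  ring

lemma consistency :
    eulerF γ UL + (SL γ UL UR) • (Ustar γ (SL γ UL UR) (Sstar γ UL UR) UL - UL)
      + (Sstar γ UL UR) • (Ustar γ (SR γ UL UR) (Sstar γ UL UR) UR
          - Ustar γ (SL γ UL UR) (Sstar γ UL UR) UL)
      + (SR γ UL UR) • (UR - Ustar γ (SR γ UL UR) (Sstar γ UL UR) UR) = eulerF γ UR := by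
  have hK := hK_rel hγ hUL hUR
  have hcL := sound_pos hγ hUL
  have hcR := sound_pos hγ hUR
  have hgL := speed_gap_L hγ hUL hUR
  have hgR := speed_gap_R hγ hUL hUR
  have hρL : UL.1 ≠ 0 := ne_of_gt hUL.1
  have hρR : UR.1 ≠ 0 := ne_of_gt hUR.1
  have huL : SL γ UL UR - vel UL ≠ 0 := by intro h; nlinarith
  have huR : SR γ UL UR - vel UR ≠ 0 := by intro h; nlinarith
  have hLs : SL γ UL UR - Sstar γ UL UR ≠ 0 := ne_of_lt (by linarith [SL_lt_Sstar hγ hUL hUR])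
  have hRs : SR γ UL UR - Sstar γ UL UR ≠ 0 := ne_of_gt (by linarith [Sstar_lt_SR hγ hUL hUR])
  have hmL : UL.1 * vel UL = UL.2.1 := by rw [vel]; field_simp
  have hmR : UR.1 * vel UR = UR.2.1 := by rw [vel]; field_simp
  set sL := SL γ UL UR
  set sR := SR γ UL UR
  set sS := Sstar γ UL UR
  have hL : sL * (UL.1 * ((sL - vel UL) / (sL - sS))) - sS * (UL.1 * ((sL - vel UL) / (sL - sS)))
      = UL.1 * (sL - vel UL) := by field_simp
  have hR : sR * (UR.1 * ((sR - vel UR) / (sR - sS))) - sS * (UR.1 * ((sR - vel UR) / (sR - sS)))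
      = UR.1 * (sR - vel UR) := by field_simp
  have hZL : sL * (UL.1 * ((sL - vel UL) / (sL - sS))
        * (UL.2.2 / UL.1 + (sS - vel UL) * (sS + press γ UL / (UL.1 * (sL - vel UL)))))
      - sS * (UL.1 * ((sL - vel UL) / (sL - sS))
        * (UL.2.2 / UL.1 + (sS - vel UL) * (sS + press γ UL / (UL.1 * (sL - vel UL)))))
      = (sL - vel UL) * UL.2.2 + UL.1 * (sL - vel UL) * (sS - vel UL) * sS
        + press γ UL * (sS - vel UL) := by field_simp; ring
  have hZR : sR * (UR.1 * ((sR - vel UR) / (sR - sS))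
        * (UR.2.2 / UR.1 + (sS - vel UR) * (sS + press γ UR / (UR.1 * (sR - vel UR)))))
      - sS * (UR.1 * ((sR - vel UR) / (sR - sS))
        * (UR.2.2 / UR.1 + (sS - vel UR) * (sS + press γ UR / (UR.1 * (sR - vel UR)))))
      = (sR - vel UR) * UR.2.2 + UR.1 * (sR - vel UR) * (sS - vel UR) * sS
        + press γ UR * (sS - vel UR) := by field_simp; ring
  refine Prod.ext_iff.2 ⟨?_, Prod.ext_iff.2 ⟨?_, ?_⟩⟩
  · simp only [eulerF, Ustar, Prod.fst_add, Prod.fst_sub, Prod.smul_fst, smul_eq_mul, mul_one]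
    linear_combination hL - hR
  · simp only [eulerF, Ustar, Prod.snd_add, Prod.snd_sub, Prod.smul_snd, Prod.fst_add,
      Prod.fst_sub, Prod.smul_fst, smul_eq_mul]
    linear_combination sS * hL - sS * hR + hK + sL * hmL - sR * hmR
  · simp only [eulerF, Ustar, Prod.snd_add, Prod.snd_sub, Prod.smul_snd, smul_eq_mul]
    linear_combination hZL - hZR + sS * hK

end Cons
end HLLCAux
namespace HLLCAux

section Rep
variable {γ : ℝ} {UL UR : St} (hγ : 1 < γ) (hUL : UL ∈ admG) (hUR : UR ∈ admG)
include hγ hUL hUR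

lemma Fhllc_min :
    Fhllc γ UL UR = eulerF γ UL
      + (min (SL γ UL UR) 0) • (Ustar γ (SL γ UL UR) (Sstar γ UL UR) UL - UL)
      + (min (Sstar γ UL UR) 0) • (Ustar γ (SR γ UL UR) (Sstar γ UL UR) UR
          - Ustar γ (SL γ UL UR) (Sstar γ UL UR) UL)
      + (min (SR γ UL UR) 0) • (UR - Ustar γ (SR γ UL UR) (Sstar γ UL UR) UR) := by
  have hLS := SL_lt_Sstar hγ hUL hUR
  have hSR := Sstar_lt_SR hγ hUL hUR
  have hcons := consistency hγ hUL hUR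
  rw [Fhllc]
  split_ifs with h1 h2 h3
  · rw [min_eq_right h1, min_eq_right (by linarith : (0:ℝ) ≤ Sstar γ UL UR),
      min_eq_right (by linarith : (0:ℝ) ≤ SR γ UL UR)]
    module
  · rw [min_eq_left (by linarith [not_le.1 h1] : SL γ UL UR ≤ 0), min_eq_right h2,
      min_eq_right (by linarith : (0:ℝ) ≤ SR γ UL UR), Fstar]
    module
  · rw [min_eq_left (by linarith [not_le.1 h1] : SL γ UL UR ≤ 0),
      min_eq_left (by linarith [not_le.1 h2] : Sstar γ UL UR ≤ 0),
      min_eq_right h3, Fstar, ← hcons]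
    module
  · rw [min_eq_left (by linarith [not_le.1 h1] : SL γ UL UR ≤ 0),
      min_eq_left (by linarith [not_le.1 h2] : Sstar γ UL UR ≤ 0),
      min_eq_left (by linarith [not_le.1 h3] : SR γ UL UR ≤ 0), ← hcons]
    all_goals module

lemma Fhllc_max :
    Fhllc γ UL UR = eulerF γ UR
      - (max (SR γ UL UR) 0) • (UR - Ustar γ (SR γ UL UR) (Sstar γ UL UR) UR)
      - (max (Sstar γ UL UR) 0) • (Ustar γ (SR γ UL UR) (Sstar γ UL UR) UR
          - Ustar γ (SL γ UL UR) (Sstar γ UL UR) UL)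
      - (max (SL γ UL UR) 0) • (Ustar γ (SL γ UL UR) (Sstar γ UL UR) UL - UL) := by
  have hLS := SL_lt_Sstar hγ hUL hUR
  have hSR := Sstar_lt_SR hγ hUL hUR
  have hcons := consistency hγ hUL hUR
  rw [Fhllc]
  split_ifs with h1 h2 h3
  · rw [max_eq_left h1, max_eq_left (by linarith : (0:ℝ) ≤ Sstar γ UL UR),
      max_eq_left (by linarith : (0:ℝ) ≤ SR γ UL UR), ← hcons]
    module
  · rw [max_eq_right (by linarith [not_le.1 h1] : SL γ UL UR ≤ 0), max_eq_left h2,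
      max_eq_left (by linarith : (0:ℝ) ≤ SR γ UL UR), Fstar, ← hcons]
    module
  · rw [max_eq_right (by linarith [not_le.1 h1] : SL γ UL UR ≤ 0),
      max_eq_right (by linarith [not_le.1 h2] : Sstar γ UL UR ≤ 0),
      max_eq_left h3, Fstar]
    module
  · rw [max_eq_right (by linarith [not_le.1 h1] : SL γ UL UR ≤ 0),
      max_eq_right (by linarith [not_le.1 h2] : Sstar γ UL UR ≤ 0),
      max_eq_right (by linarith [not_le.1 h3] : SR γ UL UR ≤ 0)]
    all_goals module

end Rep
end HLLCAux
namespace HLLCAux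

section Mem
variable {γ : ℝ} {UL UR : St} (hγ : 1 < γ) (hUL : UL ∈ admG) (hUR : UR ∈ admG)
include hγ hUL hUR

lemma ustarL_mem : Ustar γ (SL γ UL UR) (Sstar γ UL UR) UL ∈ admG := by
  apply ustar_mem hγ hUL
  · nlinarith [speed_gap_L hγ hUL hUR, sound_pos hγ hUL]
  · apply div_pos_of_neg_of_neg
    · nlinarith [speed_gap_L hγ hUL hUR, sound_pos hγ hUL]
    · linarith [SL_lt_Sstar hγ hUL hUR]

lemma ustarR_mem : Ustar γ (SR γ UL UR) (Sstar γ UL UR) UR ∈ admG := by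
  apply ustar_mem hγ hUR
  · nlinarith [speed_gap_R hγ hUL hUR, sound_pos hγ hUR]
  · apply div_pos
    · nlinarith [speed_gap_R hγ hUL hUR, sound_pos hγ hUR]
    · linarith [Sstar_lt_SR hγ hUL hUR]

end Mem
end HLLCAux


open HLLCAux in
/-- Lemma 2.9: three-state HLLC positivity. -/
theorem hllc_three_state_positivity (γ : ℝ) (hγ : 1 < γ)
    (UL UM UR : St) (hUL : UL ∈ admG) (hUM : UM ∈ admG) (hUR : UR ∈ admG)
    (lam : ℝ) (hlam : 0 < lam)
    (hcfl : lam * max (alphaMax γ UL) (max (alphaMax γ UM) (alphaMax γ UR)) ≤ 1 / 2) :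
    UM - lam • (Fhllc γ UM UR - Fhllc γ UL UM) ∈ admG := by
  have haM : alphaMax γ UM ≤ max (alphaMax γ UL) (max (alphaMax γ UM) (alphaMax γ UR)) :=
    le_trans (le_max_left _ _) (le_max_right _ _)
  obtain ⟨maxA, hmaxA⟩ : ∃ a, max (alphaMax γ UL) (max (alphaMax γ UM) (alphaMax γ UR)) = a :=
    ⟨_, rfl⟩
  rw [hmaxA] at hcfl haM
  have hmaxApos : 0 < maxA := lt_of_lt_of_le (alphaMax_pos hγ hUM) haM
  have hV1 : Ustar γ (SL γ UM UR) (Sstar γ UM UR) UM ∈ admG := ustarL_mem hγ hUM hUR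
  have hV2 : Ustar γ (SR γ UM UR) (Sstar γ UM UR) UR ∈ admG := ustarR_mem hγ hUM hUR
  have hW1 : Ustar γ (SL γ UL UM) (Sstar γ UL UM) UL ∈ admG := ustarL_mem hγ hUL hUM
  have hW2 : Ustar γ (SR γ UL UM) (Sstar γ UL UM) UM ∈ admG := ustarR_mem hγ hUL hUM
  have hFr := Fhllc_min hγ hUM hUR
  have hFl := Fhllc_max hγ hUL hUM
  -- speed bounds (before opacification)
  have hSLm : -maxA ≤ SL γ UM UR := by
    rw [← hmaxA]
    refine le_min ?_ ?_
    · have := alphaMinus_ge (γ := γ) UM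
      have h2 : alphaMax γ UM ≤ max (alphaMax γ UL) (max (alphaMax γ UM) (alphaMax γ UR)) :=
        le_trans (le_max_left _ _) (le_max_right _ _)
      linarith
    · have := alphaMinus_ge (γ := γ) UR
      have h2 : alphaMax γ UR ≤ max (alphaMax γ UL) (max (alphaMax γ UM) (alphaMax γ UR)) :=
        le_trans (le_max_right _ _) (le_max_right _ _)
      linarith
  have hSRm : SR γ UL UM ≤ maxA := by
    rw [← hmaxA]
    refine max_le ?_ ?_
    · have := alphaPlus_le (γ := γ) UL
      have h2 : alphaMax γ UL ≤ max (alphaMax γ UL) (max (alphaMax γ UM) (alphaMax γ UR)) :=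
        le_max_left _ _
      linarith
    · have := alphaPlus_le (γ := γ) UM
      have h2 : alphaMax γ UM ≤ max (alphaMax γ UL) (max (alphaMax γ UM) (alphaMax γ UR)) :=
        le_trans (le_max_left _ _) (le_max_right _ _)
      linarith
  have hLSr := SL_lt_Sstar hγ hUM hUR
  have hSRr := Sstar_lt_SR hγ hUM hUR
  have hLSl := SL_lt_Sstar hγ hUL hUM
  have hSRl := Sstar_lt_SR hγ hUL hUM
  -- opacify states
  obtain ⟨V1, hV1e⟩ : ∃ V, Ustar γ (SL γ UM UR) (Sstar γ UM UR) UM = V := ⟨_, rfl⟩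
  obtain ⟨V2, hV2e⟩ : ∃ V, Ustar γ (SR γ UM UR) (Sstar γ UM UR) UR = V := ⟨_, rfl⟩
  obtain ⟨W1, hW1e⟩ : ∃ V, Ustar γ (SL γ UL UM) (Sstar γ UL UM) UL = V := ⟨_, rfl⟩
  obtain ⟨W2, hW2e⟩ : ∃ V, Ustar γ (SR γ UL UM) (Sstar γ UL UM) UM = V := ⟨_, rfl⟩
  rw [hV1e] at hV1 hFr
  rw [hV2e] at hV2 hFr
  rw [hW1e] at hW1 hFl
  rw [hW2e] at hW2 hFl
  -- opacify speeds
  obtain ⟨s1, hs1⟩ : ∃ x, SL γ UM UR = x := ⟨_, rfl⟩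
  obtain ⟨s2, hs2⟩ : ∃ x, Sstar γ UM UR = x := ⟨_, rfl⟩
  obtain ⟨s3, hs3⟩ : ∃ x, SR γ UM UR = x := ⟨_, rfl⟩
  obtain ⟨t1, ht1⟩ : ∃ x, SL γ UL UM = x := ⟨_, rfl⟩
  obtain ⟨t2, ht2⟩ : ∃ x, Sstar γ UL UM = x := ⟨_, rfl⟩
  obtain ⟨t3, ht3⟩ : ∃ x, SR γ UL UM = x := ⟨_, rfl⟩
  rw [hs1] at hFr hSLm hLSr
  rw [hs2] at hFr hLSr hSRr
  rw [hs3] at hFr hSRr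
  rw [ht1] at hFl hLSl
  rw [ht2] at hFl hLSl hSRl
  rw [ht3] at hFl hSRm hSRl
  clear hV1e hV2e hW1e hW2e hs1 hs2 hs3 ht1 ht2 ht3 hmaxA haM
  -- coefficients
  have hm1b : -maxA ≤ min s1 0 := le_min hSLm (by linarith)
  have hM3b : max t3 0 ≤ maxA := max_le hSRm (by linarith)
  have hm2b : -maxA < min s2 0 := lt_min (by linarith) (by linarith)
  have hc0 : 0 ≤ 1 + lam * min s1 0 - lam * max t3 0 := by
    nlinarith [mul_le_mul_of_nonneg_left hm1b hlam.le, mul_le_mul_of_nonneg_left hM3b hlam.le]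
  have hc1 : 0 ≤ lam * (min s2 0 - min s1 0) := by
    have : min s1 0 ≤ min s2 0 := min_le_min hLSr.le le_rfl
    nlinarith
  have hc2 : 0 ≤ lam * (min s3 0 - min s2 0) := by
    have : min s2 0 ≤ min s3 0 := min_le_min hSRr.le le_rfl
    nlinarith
  have hc3 : 0 ≤ lam * (0 - min s3 0) := by
    have : min s3 0 ≤ 0 := min_le_right _ _
    nlinarith
  have hc4 : 0 ≤ lam * (max t3 0 - max t2 0) := by
    have : max t2 0 ≤ max t3 0 := max_le_max hSRl.le le_rfl
    nlinarith
  have hc5 : 0 ≤ lam * (max t2 0 - max t1 0) := by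
    have : max t1 0 ≤ max t2 0 := max_le_max hLSl.le le_rfl
    nlinarith
  have hc6 : 0 ≤ lam * (max t1 0 - 0) := by
    have : (0:ℝ) ≤ max t1 0 := le_max_right _ _
    nlinarith
  have hc01 : 0 < (1 + lam * min s1 0 - lam * max t3 0) + lam * (min s2 0 - min s1 0) := by
    have h1 : lam * (-(min s2 0)) < lam * maxA := by
      apply mul_lt_mul_of_pos_left _ hlam
      linarith
    have h2 : lam * max t3 0 ≤ lam * maxA := mul_le_mul_of_nonneg_left hM3b hlam.le
    nlinarith
  -- convex-combination identity
  have key : UM - lam • (Fhllc γ UM UR - Fhllc γ UL UM)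
      = ((((((1 + lam * min s1 0 - lam * max t3 0) • UM
          + (lam * (min s2 0 - min s1 0)) • V1)
          + (lam * (min s3 0 - min s2 0)) • V2) + (lam * (0 - min s3 0)) • UR)
          + (lam * (max t3 0 - max t2 0)) • W2) + (lam * (max t2 0 - max t1 0)) • W1)
          + (lam * (max t1 0 - 0)) • UL := by
    rw [hFr, hFl]
    module
  rw [key]
  have base : (1 + lam * min s1 0 - lam * max t3 0) • UM
      + (lam * (min s2 0 - min s1 0)) • V1 ∈ admG := by
    rcases hc0.lt_or_eq with h | h
    · exact admG_add_smul (admG_smul h hUM) hc1 hV1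
    · rw [← h, zero_smul, zero_add]
      apply admG_smul _ hV1
      linarith
  exact admG_add_smul (admG_add_smul (admG_add_smul (admG_add_smul
    (admG_add_smul base hc2 hV2) hc3 hUR) hc4 hW2) hc5 hW1) hc6 hUL
end

section
/- Scaled three-state HLLC positivity (Lemma 2.11): for any parameters ζ₁, ζ₂, ζ₃ > 0, any admissible states U_L, U_M, U_R ∈ G, and any λ > 0 satisfying λ · max{α_max(U_L), α_max(U_M), α_max(U_R)} ≤ 1/2, one has ζ₂U_M − λ(F^hllc(ζ₂U_M, ζ₃U_R) − F^hllc(ζ₁U_L, ζ₂U_M)) ∈ G. -/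
-- ## Component simp lemmas
lemma St.smul_1 (a : ℝ) (p : St) : (a • p).1 = a * p.1 := rfl
lemma St.smul_21 (a : ℝ) (p : St) : (a • p).2.1 = a * p.2.1 := rfl
lemma St.smul_22 (a : ℝ) (p : St) : (a • p).2.2 = a * p.2.2 := rfl
lemma St.add_1 (p q : St) : (p + q).1 = p.1 + q.1 := rfl
lemma St.add_21 (p q : St) : (p + q).2.1 = p.2.1 + q.2.1 := rfl
lemma St.add_22 (p q : St) : (p + q).2.2 = p.2.2 + q.2.2 := rfl
lemma St.sub_1 (p q : St) : (p - q).1 = p.1 - q.1 := rfl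
lemma St.sub_21 (p q : St) : (p - q).2.1 = p.2.1 - q.2.1 := rfl
lemma St.sub_22 (p q : St) : (p - q).2.2 = p.2.2 - q.2.2 := rfl

-- ## admissible set basics
lemma admG_mk {U : St} (h1 : 0 < U.1) (h2 : U.2.1 ^ 2 < 2 * U.1 * U.2.2) : U ∈ admG := by
  refine ⟨h1, ?_⟩
  rw [sub_pos, div_lt_iff₀ (by positivity)]
  linarith

lemma admG_rho {U : St} (h : U ∈ admG) : 0 < U.1 := h.1

lemma admG_ie {U : St} (h : U ∈ admG) : U.2.1 ^ 2 < 2 * U.1 * U.2.2 := by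
  have h2 := h.2
  rw [sub_pos, div_lt_iff₀ (by linarith [h.1])] at h2
  linarith

lemma admG_smul {a : ℝ} (ha : 0 < a) {U : St} (hU : U ∈ admG) : a • U ∈ admG := by
  refine admG_mk ?_ ?_
  · rw [St.smul_1]; exact mul_pos ha hU.1
  · rw [St.smul_1, St.smul_21, St.smul_22]
    nlinarith [mul_lt_mul_of_pos_left (admG_ie hU) (mul_pos ha ha)]

lemma admG_add {U V : St} (hU : U ∈ admG) (hV : V ∈ admG) : U + V ∈ admG := by
  have h1 := admG_rho hU; have h2 := admG_rho hV
  have h3 := admG_ie hU; have h4 := admG_ie hV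
  refine admG_mk ?_ ?_
  · rw [St.add_1]; linarith
  · rw [St.add_1, St.add_21, St.add_22]
    nlinarith [sq_nonneg (U.1 * V.2.1 - V.1 * U.2.1), mul_pos h1 h2,
      mul_pos (mul_pos h1 h1) (sub_pos.mpr h4), mul_pos (mul_pos h2 h2) (sub_pos.mpr h3)]

lemma admG_smul_add {a : ℝ} (ha : 0 ≤ a) {U V : St} (hU : U ∈ admG) (hV : V ∈ admG) :
    a • U + V ∈ admG := by
  rcases ha.eq_or_lt with h | h
  · simp [← h, hV]
  · exact admG_add (admG_smul h hU) hV

lemma admG_convex2 {a b : ℝ} (ha : 0 ≤ a) (hb : 0 ≤ b) (hab : a + b = 1)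
    {U V : St} (hU : U ∈ admG) (hV : V ∈ admG) : a • U + b • V ∈ admG := by
  rcases hb.eq_or_lt with h | h
  · have : a = 1 := by linarith
    simp [this, ← h, hU]
  · exact admG_smul_add ha hU (admG_smul h hV)

-- ## pressure / sound basics
lemma press_pos {γ : ℝ} (hγ : 1 < γ) {U : St} (h : U ∈ admG) : 0 < press γ U :=
  mul_pos (by linarith) h.2

lemma sound_sq {γ : ℝ} (hγ : 1 < γ) {U : St} (h : U ∈ admG) :
    sound γ U ^ 2 = γ * press γ U / U.1 := by
  have hp := press_pos hγ h
  have hρ := admG_rho h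
  rw [sound, Real.sq_sqrt (by positivity)]

lemma sound_pos {γ : ℝ} (hγ : 1 < γ) {U : St} (h : U ∈ admG) : 0 < sound γ U := by
  have hp := press_pos hγ h
  have hρ := admG_rho h
  rw [sound]
  exact Real.sqrt_pos.mpr (by positivity)

lemma alphaMax_nonneg {γ : ℝ} (hγ : 1 < γ) {U : St} (h : U ∈ admG) : 0 ≤ alphaMax γ U := by
  rw [alphaMax]
  have := sound_pos hγ h
  have := abs_nonneg (vel U)
  linarith

-- ## scaling lemmas
lemma vel_smul {ζ : ℝ} (hζ : ζ ≠ 0) (U : St) : vel (ζ • U) = vel U := by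
  rw [vel, vel, St.smul_1, St.smul_21, mul_div_mul_left _ _ hζ]

lemma press_smul (γ : ℝ) {ζ : ℝ} (hζ : ζ ≠ 0) (U : St) : press γ (ζ • U) = ζ * press γ U := by
  rw [press, press, St.smul_1, St.smul_21, St.smul_22]
  rcases eq_or_ne U.1 0 with h | h
  · simp [h, mul_comm]
    ring
  · field_simp

lemma sound_smul (γ : ℝ) {ζ : ℝ} (hζ : 0 < ζ) (U : St) : sound γ (ζ • U) = sound γ U := by
  rw [sound, sound, press_smul γ hζ.ne' U, St.smul_1]
  congr 1
  rcases eq_or_ne U.1 0 with h | h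
  · simp [h]
  · field_simp

lemma alphaMax_smul (γ : ℝ) {ζ : ℝ} (hζ : 0 < ζ) (U : St) : alphaMax γ (ζ • U) = alphaMax γ U := by
  rw [alphaMax, alphaMax, vel_smul hζ.ne', sound_smul γ hζ]

-- ## wave speed inequalities
section speeds
variable {γ : ℝ} (hγ : 1 < γ) {VL VR : St} (hL : VL ∈ admG) (hR : VR ∈ admG)

include hγ hL hR

lemma SL_sub_uL : SL γ VL VR - vel VL ≤ -sound γ VL := by
  have h1 := min_le_left (alphaMinus γ VL) (alphaMinus γ VR)
  have h2 : alphaMinus γ VL = vel VL - sound γ VL := rfl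
  rw [SL]; linarith

lemma SL_sub_uR : SL γ VL VR - vel VR ≤ -sound γ VR := by
  have h1 := min_le_right (alphaMinus γ VL) (alphaMinus γ VR)
  have h2 : alphaMinus γ VR = vel VR - sound γ VR := rfl
  rw [SL]; linarith

lemma SR_sub_uR : sound γ VR ≤ SR γ VL VR - vel VR := by
  have h1 := le_max_right (alphaPlus γ VL) (alphaPlus γ VR)
  have h2 : alphaPlus γ VR = vel VR + sound γ VR := rfl
  rw [SR]; linarith

lemma SR_sub_uL : sound γ VL ≤ SR γ VL VR - vel VL := by
  have h1 := le_max_left (alphaPlus γ VL) (alphaPlus γ VR)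
  have h2 : alphaPlus γ VL = vel VL + sound γ VL := rfl
  rw [SR]; linarith

lemma SLuL_neg : SL γ VL VR - vel VL < 0 :=
  lt_of_le_of_lt (SL_sub_uL hγ hL hR) (by linarith [sound_pos hγ hL])

lemma SRuR_pos : 0 < SR γ VL VR - vel VR :=
  lt_of_lt_of_le (sound_pos hγ hR) (SR_sub_uR hγ hL hR)

lemma denom_neg : VL.1 * (SL γ VL VR - vel VL) - VR.1 * (SR γ VL VR - vel VR) < 0 := by
  have h1 := SLuL_neg hγ hL hR
  have h2 := SRuR_pos hγ hL hR
  have h3 := admG_rho hL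
  have h4 := admG_rho hR
  nlinarith

lemma rhoL_sq_bound : γ * press γ VL ≤ VL.1 * (SL γ VL VR - vel VL) ^ 2 := by
  have h1 := SL_sub_uL hγ hL hR
  have h2 := sound_pos hγ hL
  have h3 := sound_sq hγ hL
  have h4 := admG_rho hL
  have h5 : sound γ VL ^ 2 ≤ (SL γ VL VR - vel VL) ^ 2 := by nlinarith
  rw [h3] at h5
  rw [div_le_iff₀ h4] at h5
  linarith [mul_comm (VL.1) ((SL γ VL VR - vel VL) ^ 2)]

lemma rhoR_sq_bound : γ * press γ VR ≤ VR.1 * (SR γ VL VR - vel VR) ^ 2 := by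
  have h1 := SR_sub_uR hγ hL hR
  have h2 := sound_pos hγ hR
  have h3 := sound_sq hγ hR
  have h4 := admG_rho hR
  have h5 : sound γ VR ^ 2 ≤ (SR γ VL VR - vel VR) ^ 2 := by nlinarith
  rw [h3] at h5
  rw [div_le_iff₀ h4] at h5
  linarith [mul_comm (VR.1) ((SR γ VL VR - vel VR) ^ 2)]

lemma Sstar_gt_SL : SL γ VL VR < Sstar γ VL VR := by
  have hD := denom_neg hγ hL hR
  have hD' : VL.1 * (SL γ VL VR - vel VL) - VR.1 * (SR γ VL VR - vel VR) ≠ 0 := ne_of_lt hD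
  have h1 : Sstar γ VL VR - SL γ VL VR =
      (press γ VR - press γ VL + VL.1 * vel VL * (SL γ VL VR - vel VL)
        - VR.1 * vel VR * (SR γ VL VR - vel VR)
        - SL γ VL VR * (VL.1 * (SL γ VL VR - vel VL) - VR.1 * (SR γ VL VR - vel VR))) /
      (VL.1 * (SL γ VL VR - vel VL) - VR.1 * (SR γ VL VR - vel VR)) := by
    rw [Sstar]; field_simp
  have hnum : press γ VR - press γ VL + VL.1 * vel VL * (SL γ VL VR - vel VL)
        - VR.1 * vel VR * (SR γ VL VR - vel VR)
        - SL γ VL VR * (VL.1 * (SL γ VL VR - vel VL) - VR.1 * (SR γ VL VR - vel VR)) < 0 := by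
    have e1 := rhoL_sq_bound hγ hL hR
    have e2 : VR.1 * (SR γ VL VR - vel VR) * (SL γ VL VR - vel VR) ≤ -(γ * press γ VR) := by
      have a1 := SR_sub_uR hγ hL hR
      have a2 := SL_sub_uR hγ hL hR
      have a3 := sound_pos hγ hR
      have a4 := admG_rho hR
      have h3 := sound_sq hγ hR
      have h5 : sound γ VR ^ 2 ≤ -((SR γ VL VR - vel VR) * (SL γ VL VR - vel VR)) := by
        nlinarith
      rw [h3, div_le_iff₀ a4] at h5
      nlinarith
    have hpL := press_pos hγ hL
    have hpR := press_pos hγ hR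
    nlinarith
  rw [sub_pos.symm, h1]
  exact div_pos_of_neg_of_neg hnum hD

lemma Sstar_lt_SR : Sstar γ VL VR < SR γ VL VR := by
  have hD := denom_neg hγ hL hR
  have hD' : VL.1 * (SL γ VL VR - vel VL) - VR.1 * (SR γ VL VR - vel VR) ≠ 0 := ne_of_lt hD
  have h1 : Sstar γ VL VR - SR γ VL VR =
      (press γ VR - press γ VL + VL.1 * vel VL * (SL γ VL VR - vel VL)
        - VR.1 * vel VR * (SR γ VL VR - vel VR)
        - SR γ VL VR * (VL.1 * (SL γ VL VR - vel VL) - VR.1 * (SR γ VL VR - vel VR))) /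
      (VL.1 * (SL γ VL VR - vel VL) - VR.1 * (SR γ VL VR - vel VR)) := by
    rw [Sstar]; field_simp
  have hnum : 0 < press γ VR - press γ VL + VL.1 * vel VL * (SL γ VL VR - vel VL)
        - VR.1 * vel VR * (SR γ VL VR - vel VR)
        - SR γ VL VR * (VL.1 * (SL γ VL VR - vel VL) - VR.1 * (SR γ VL VR - vel VR)) := by
    have e1 := rhoR_sq_bound hγ hL hR
    have e2 : γ * press γ VL ≤ VL.1 * ((SL γ VL VR - vel VL) * (vel VL - SR γ VL VR)) := by
      have a1 := SL_sub_uL hγ hL hR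
      have a2 := SR_sub_uL hγ hL hR
      have a3 := sound_pos hγ hL
      have a4 := admG_rho hL
      have a5 : VL.1 * sound γ VL ^ 2 = γ * press γ VL := by
        rw [sound_sq hγ hL, mul_comm, div_mul_cancel₀ _ (ne_of_gt a4)]
      have hAB : sound γ VL ^ 2 ≤ (vel VL - SL γ VL VR) * (SR γ VL VR - vel VL) := by
        nlinarith [mul_nonneg (by linarith : (0:ℝ) ≤ vel VL - SL γ VL VR - sound γ VL)
          (by linarith : (0:ℝ) ≤ SR γ VL VR - vel VL - sound γ VL)]
      nlinarith [mul_le_mul_of_nonneg_left hAB (le_of_lt a4)]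
    have hpL := press_pos hγ hL
    have hpR := press_pos hγ hR
    nlinarith
  have : Sstar γ VL VR - SR γ VL VR < 0 := by
    rw [h1]; exact div_neg_of_pos_of_neg hnum hD
  linarith

end speeds

-- ## component identities for Fstar
lemma Fstar_mass (γ s t : ℝ) (U : St) (hst : s - t ≠ 0) (hρ : U.1 ≠ 0)
    (hsu : s - vel U ≠ 0) :
    (Fstar γ s t U).1 = t * (Ustar γ s t U).1 := by
  have hsu' : s * U.1 - U.2.1 ≠ 0 := by
    intro h; apply hsu; rw [vel]; field_simp; linarith [h]
  simp only [Fstar, Ustar, eulerF, vel, press, St.add_1, St.smul_1, St.sub_1]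
  field_simp
  ring

lemma Fstar_mom (γ s t : ℝ) (U : St) (hst : s - t ≠ 0) (hρ : U.1 ≠ 0)
    (hsu : s - vel U ≠ 0) :
    (Fstar γ s t U).2.1 = t * (Ustar γ s t U).2.1
      + (press γ U + U.1 * (s - vel U) * (t - vel U)) := by
  simp only [Fstar, Ustar, eulerF, vel, press, St.add_21, St.smul_21, St.sub_21, St.smul_1]
  field_simp
  ring

lemma Fstar_energy (γ s t : ℝ) (U : St) (hst : s - t ≠ 0) (hρ : U.1 ≠ 0)
    (hsu : s - vel U ≠ 0) :
    (Fstar γ s t U).2.2 = t * ((Ustar γ s t U).2.2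
      + (press γ U + U.1 * (s - vel U) * (t - vel U))) := by
  have hsu' : s * U.1 - U.2.1 ≠ 0 := by
    intro h; apply hsu; rw [vel]; field_simp; linarith [h]
  have hsu'' : U.1 * s - U.2.1 ≠ 0 := by rw [mul_comm]; exact hsu'
  simp only [Fstar, Ustar, eulerF, vel, press, St.add_22, St.smul_22, St.sub_22, St.smul_1]
  field_simp
  ring

-- ## equality of star pressures
lemma pstar_eq (γ : ℝ) (VL VR : St)
    (hD : VL.1 * (SL γ VL VR - vel VL) - VR.1 * (SR γ VL VR - vel VR) ≠ 0) :
    press γ VL + VL.1 * (SL γ VL VR - vel VL) * (Sstar γ VL VR - vel VL)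
      = press γ VR + VR.1 * (SR γ VL VR - vel VR) * (Sstar γ VL VR - vel VR) := by
  have hst : Sstar γ VL VR * (VL.1 * (SL γ VL VR - vel VL) - VR.1 * (SR γ VL VR - vel VR))
      = press γ VR - press γ VL + VL.1 * vel VL * (SL γ VL VR - vel VL)
        - VR.1 * vel VR * (SR γ VL VR - vel VR) := by
    rw [Sstar, div_mul_cancel₀ _ hD]
  linear_combination hst

-- ## contact identity
lemma contact (γ : ℝ) (VL VR : St) (hρL : VL.1 ≠ 0) (hρR : VR.1 ≠ 0)
    (hsuL : SL γ VL VR - vel VL ≠ 0) (hsuR : SR γ VL VR - vel VR ≠ 0)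
    (hstL : SL γ VL VR - Sstar γ VL VR ≠ 0) (hstR : SR γ VL VR - Sstar γ VL VR ≠ 0)
    (hD : VL.1 * (SL γ VL VR - vel VL) - VR.1 * (SR γ VL VR - vel VR) ≠ 0) :
    Fstar γ (SR γ VL VR) (Sstar γ VL VR) VR
      = Fstar γ (SL γ VL VR) (Sstar γ VL VR) VL
        + Sstar γ VL VR • (Ustar γ (SR γ VL VR) (Sstar γ VL VR) VR
            - Ustar γ (SL γ VL VR) (Sstar γ VL VR) VL) := by
  have hp := pstar_eq γ VL VR hD
  have hmL := Fstar_mass γ (SL γ VL VR) (Sstar γ VL VR) VL hstL hρL hsuL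
  have hmR := Fstar_mass γ (SR γ VL VR) (Sstar γ VL VR) VR hstR hρR hsuR
  have hqL := Fstar_mom γ (SL γ VL VR) (Sstar γ VL VR) VL hstL hρL hsuL
  have hqR := Fstar_mom γ (SR γ VL VR) (Sstar γ VL VR) VR hstR hρR hsuR
  have heL := Fstar_energy γ (SL γ VL VR) (Sstar γ VL VR) VL hstL hρL hsuL
  have heR := Fstar_energy γ (SR γ VL VR) (Sstar γ VL VR) VR hstR hρR hsuR
  refine Prod.ext ?_ (Prod.ext ?_ ?_)
  · simp only [St.add_1, St.smul_1, St.sub_1]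
    linear_combination hmR - hmL
  · simp only [St.add_21, St.smul_21, St.sub_21]
    linear_combination hqR - hqL - hp
  · simp only [St.add_22, St.smul_22, St.sub_22]
    linear_combination heR - heL - Sstar γ VL VR * hp

-- ## admissibility of the intermediate states
lemma Ustar_mem {γ : ℝ} (hγ : 1 < γ) {s t : ℝ} {U : St} (hU : U ∈ admG)
    (hnum : 0 < (s - vel U) / (s - t))
    (hsq : γ * press γ U ≤ U.1 * (s - vel U) ^ 2) :
    Ustar γ s t U ∈ admG := by
  have hρ := admG_rho hU
  have hp := press_pos hγ hU
  have hγ1 : γ - 1 ≠ 0 := by linarith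
  have hsu : s - vel U ≠ 0 := by
    intro h
    rw [h, zero_div] at hnum
    exact lt_irrefl 0 hnum
  have hf : 0 < U.1 * ((s - vel U) / (s - t)) := mul_pos hρ hnum
  refine admG_mk ?_ ?_
  · simpa only [Ustar, St.smul_1, mul_one] using hf
  · simp only [Ustar, St.smul_1, St.smul_21, St.smul_22, mul_one]
    have key : t ^ 2 < 2 * (U.2.2 / U.1 + (t - vel U) * (t + press γ U / (U.1 * (s - vel U)))) := by
      have hE : U.2.2 / U.1 = press γ U / ((γ - 1) * U.1) + vel U ^ 2 / 2 := by
        rw [press, vel]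
        field_simp
        ring
      have hq2 : press γ U ^ 2 / (U.1 * (s - vel U)) ^ 2
          < 2 * press γ U / ((γ - 1) * U.1) := by
        rw [div_lt_div_iff₀ (pow_two_pos_of_ne_zero (mul_ne_zero (ne_of_gt hρ) hsu))
          (mul_pos (by linarith : (0:ℝ) < γ - 1) hρ)]
        nlinarith [mul_le_mul_of_nonneg_left hsq
            (by positivity : (0:ℝ) ≤ 2 * press γ U * U.1),
          mul_pos (mul_pos hρ hp) hp]
      nlinarith [sq_nonneg (t - vel U + press γ U / (U.1 * (s - vel U))), hq2, hE,
        div_pow (press γ U) (U.1 * (s - vel U)) 2,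
        mul_div_assoc (2:ℝ) (press γ U) ((γ - 1) * U.1)]
    nlinarith [mul_lt_mul_of_pos_left key (mul_pos hf hf), hf]

-- ## CFL speed bounds
lemma cSL_ge {γ : ℝ} (hγ : 1 < γ) {VL VR : St} (hL : VL ∈ admG) (hR : VR ∈ admG)
    {c : ℝ} (hc : 0 ≤ c) (hcL : c * alphaMax γ VL ≤ 1) (hcR : c * alphaMax γ VR ≤ 1) :
    -1 ≤ c * SL γ VL VR := by
  have hA : -(alphaMax γ VL) ≤ alphaMinus γ VL := by
    have h1 : alphaMinus γ VL = vel VL - sound γ VL := rfl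
    have h2 : alphaMax γ VL = |vel VL| + sound γ VL := rfl
    have := neg_abs_le (vel VL)
    linarith
  have hB : -(alphaMax γ VR) ≤ alphaMinus γ VR := by
    have h1 : alphaMinus γ VR = vel VR - sound γ VR := rfl
    have h2 : alphaMax γ VR = |vel VR| + sound γ VR := rfl
    have := neg_abs_le (vel VR)
    linarith
  rw [SL]
  rcases min_cases (alphaMinus γ VL) (alphaMinus γ VR) with ⟨h, _⟩ | ⟨h, _⟩ <;> rw [h]
  · nlinarith [mul_le_mul_of_nonneg_left hA hc]
  · nlinarith [mul_le_mul_of_nonneg_left hB hc]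

lemma cSR_le {γ : ℝ} (hγ : 1 < γ) {VL VR : St} (hL : VL ∈ admG) (hR : VR ∈ admG)
    {c : ℝ} (hc : 0 ≤ c) (hcL : c * alphaMax γ VL ≤ 1) (hcR : c * alphaMax γ VR ≤ 1) :
    c * SR γ VL VR ≤ 1 := by
  have hA : alphaPlus γ VL ≤ alphaMax γ VL := by
    have h1 : alphaPlus γ VL = vel VL + sound γ VL := rfl
    have h2 : alphaMax γ VL = |vel VL| + sound γ VL := rfl
    have := le_abs_self (vel VL)
    linarith
  have hB : alphaPlus γ VR ≤ alphaMax γ VR := by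
    have h1 : alphaPlus γ VR = vel VR + sound γ VR := rfl
    have h2 : alphaMax γ VR = |vel VR| + sound γ VR := rfl
    have := le_abs_self (vel VR)
    linarith
  rw [SR]
  rcases max_cases (alphaPlus γ VL) (alphaPlus γ VR) with ⟨h, _⟩ | ⟨h, _⟩ <;> rw [h]
  · nlinarith [mul_le_mul_of_nonneg_left hA hc]
  · nlinarith [mul_le_mul_of_nonneg_left hB hc]

-- ## one-sided positivity, left state
lemma one_sided_L {γ : ℝ} (hγ : 1 < γ) {VL VR : St} (hL : VL ∈ admG) (hR : VR ∈ admG)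
    {c : ℝ} (hc : 0 < c) (hcL : c * alphaMax γ VL ≤ 1) (hcR : c * alphaMax γ VR ≤ 1) :
    VL - c • (Fhllc γ VL VR - eulerF γ VL) ∈ admG := by
  have hρL := admG_rho hL
  have hρR := admG_rho hR
  have hsuL := SLuL_neg hγ hL hR
  have hsuR := SRuR_pos hγ hL hR
  have hstL := Sstar_gt_SL hγ hL hR
  have hstR := Sstar_lt_SR hγ hL hR
  have hD := denom_neg hγ hL hR
  have hUsL : Ustar γ (SL γ VL VR) (Sstar γ VL VR) VL ∈ admG :=
    Ustar_mem hγ hL (div_pos_of_neg_of_neg hsuL (by linarith)) (rhoL_sq_bound hγ hL hR)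
  have hUsR : Ustar γ (SR γ VL VR) (Sstar γ VL VR) VR ∈ admG :=
    Ustar_mem hγ hR (div_pos (by linarith) (by linarith)) (rhoR_sq_bound hγ hL hR)
  have hK := contact γ VL VR (ne_of_gt hρL) (ne_of_gt hρR) (ne_of_lt hsuL) (ne_of_gt hsuR)
    (ne_of_lt (by linarith : SL γ VL VR - Sstar γ VL VR < 0))
    (ne_of_gt (by linarith : (0:ℝ) < SR γ VL VR - Sstar γ VL VR)) (ne_of_lt hD)
  rw [Fstar, Fstar] at hK
  have hb1 := cSL_ge hγ hL hR hc.le hcL hcR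
  have hb2 := cSR_le hγ hL hR hc.le hcL hcR
  rw [Fhllc]
  split_ifs with h1 h2 h3
  · simpa using hL
  · push_neg at h1
    have hdec : VL - c • (Fstar γ (SL γ VL VR) (Sstar γ VL VR) VL - eulerF γ VL)
        = (1 + c * SL γ VL VR) • VL
          + (-(c * SL γ VL VR)) • Ustar γ (SL γ VL VR) (Sstar γ VL VR) VL := by
      rw [Fstar]; module
    rw [hdec]
    exact admG_smul_add (by linarith) hL
      (admG_smul (by nlinarith [mul_pos hc (neg_pos.mpr h1)]) hUsL)
  · push_neg at h1 h2
    have hdec : VL - c • (Fstar γ (SR γ VL VR) (Sstar γ VL VR) VR - eulerF γ VL)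
        = (1 + c * SL γ VL VR) • VL
          + ((c * (Sstar γ VL VR - SL γ VL VR)) • Ustar γ (SL γ VL VR) (Sstar γ VL VR) VL
            + (-(c * Sstar γ VL VR)) • Ustar γ (SR γ VL VR) (Sstar γ VL VR) VR) := by
      rw [Fstar]
      linear_combination (norm := module) (-c : ℝ) • hK
    rw [hdec]
    exact admG_smul_add (by linarith) hL
      (admG_add (admG_smul (mul_pos hc (by linarith)) hUsL)
        (admG_smul (by nlinarith [mul_pos hc (neg_pos.mpr h2)]) hUsR))
  · push_neg at h1 h2 h3
    have hdec : VL - c • (eulerF γ VR - eulerF γ VL)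
        = (1 + c * SL γ VL VR) • VL
          + ((c * (Sstar γ VL VR - SL γ VL VR)) • Ustar γ (SL γ VL VR) (Sstar γ VL VR) VL
            + ((c * (SR γ VL VR - Sstar γ VL VR)) • Ustar γ (SR γ VL VR) (Sstar γ VL VR) VR
              + (-(c * SR γ VL VR)) • VR)) := by
      linear_combination (norm := module) (-c : ℝ) • hK
    rw [hdec]
    exact admG_smul_add (by linarith) hL
      (admG_add (admG_smul (mul_pos hc (by linarith)) hUsL)
        (admG_add (admG_smul (mul_pos hc (by linarith)) hUsR)
          (admG_smul (by nlinarith [mul_pos hc (neg_pos.mpr h3)]) hR)))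

-- ## one-sided positivity, right state
lemma one_sided_R {γ : ℝ} (hγ : 1 < γ) {VL VR : St} (hL : VL ∈ admG) (hR : VR ∈ admG)
    {c : ℝ} (hc : 0 < c) (hcL : c * alphaMax γ VL ≤ 1) (hcR : c * alphaMax γ VR ≤ 1) :
    VR + c • (Fhllc γ VL VR - eulerF γ VR) ∈ admG := by
  have hρL := admG_rho hL
  have hρR := admG_rho hR
  have hsuL := SLuL_neg hγ hL hR
  have hsuR := SRuR_pos hγ hL hR
  have hstL := Sstar_gt_SL hγ hL hR
  have hstR := Sstar_lt_SR hγ hL hR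
  have hD := denom_neg hγ hL hR
  have hUsL : Ustar γ (SL γ VL VR) (Sstar γ VL VR) VL ∈ admG :=
    Ustar_mem hγ hL (div_pos_of_neg_of_neg hsuL (by linarith)) (rhoL_sq_bound hγ hL hR)
  have hUsR : Ustar γ (SR γ VL VR) (Sstar γ VL VR) VR ∈ admG :=
    Ustar_mem hγ hR (div_pos (by linarith) (by linarith)) (rhoR_sq_bound hγ hL hR)
  have hK := contact γ VL VR (ne_of_gt hρL) (ne_of_gt hρR) (ne_of_lt hsuL) (ne_of_gt hsuR)
    (ne_of_lt (by linarith : SL γ VL VR - Sstar γ VL VR < 0))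
    (ne_of_gt (by linarith : (0:ℝ) < SR γ VL VR - Sstar γ VL VR)) (ne_of_lt hD)
  rw [Fstar, Fstar] at hK
  have hb1 := cSL_ge hγ hL hR hc.le hcL hcR
  have hb2 := cSR_le hγ hL hR hc.le hcL hcR
  rw [Fhllc]
  split_ifs with h1 h2 h3
  · have hdec : VR + c • (eulerF γ VL - eulerF γ VR)
        = (1 - c * SR γ VL VR) • VR
          + ((c * SL γ VL VR) • VL
            + ((c * (Sstar γ VL VR - SL γ VL VR)) • Ustar γ (SL γ VL VR) (Sstar γ VL VR) VL
              + (c * (SR γ VL VR - Sstar γ VL VR)) • Ustar γ (SR γ VL VR) (Sstar γ VL VR) VR)) := by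
      linear_combination (norm := module) (-c : ℝ) • hK
    rw [hdec]
    exact admG_smul_add (by linarith) hR
      (admG_smul_add (mul_nonneg hc.le h1) hL
        (admG_add (admG_smul (mul_pos hc (by linarith)) hUsL)
          (admG_smul (mul_pos hc (by linarith)) hUsR)))
  · push_neg at h1
    have hdec : VR + c • (Fstar γ (SL γ VL VR) (Sstar γ VL VR) VL - eulerF γ VR)
        = (1 - c * SR γ VL VR) • VR
          + ((c * Sstar γ VL VR) • Ustar γ (SL γ VL VR) (Sstar γ VL VR) VL
            + (c * (SR γ VL VR - Sstar γ VL VR)) • Ustar γ (SR γ VL VR) (Sstar γ VL VR) VR) := by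
      rw [Fstar]
      linear_combination (norm := module) (-c : ℝ) • hK
    rw [hdec]
    exact admG_smul_add (by linarith) hR
      (admG_smul_add (mul_nonneg hc.le h2) hUsL
        (admG_smul (mul_pos hc (by linarith)) hUsR))
  · push_neg at h1 h2
    have hdec : VR + c • (Fstar γ (SR γ VL VR) (Sstar γ VL VR) VR - eulerF γ VR)
        = (1 - c * SR γ VL VR) • VR
          + (c * SR γ VL VR) • Ustar γ (SR γ VL VR) (Sstar γ VL VR) VR := by
      rw [Fstar]; module
    rw [hdec]
    exact admG_convex2 (by linarith) (mul_nonneg hc.le h3) (by ring) hR hUsR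
  · simpa using hR

/-- Lemma 2.11: scaled three-state HLLC positivity. -/
theorem hllc_scaled_three_state_positivity (γ : ℝ) (hγ : 1 < γ)
    (ζ₁ ζ₂ ζ₃ : ℝ) (hζ₁ : 0 < ζ₁) (hζ₂ : 0 < ζ₂) (hζ₃ : 0 < ζ₃)
    (UL UM UR : St) (hUL : UL ∈ admG) (hUM : UM ∈ admG) (hUR : UR ∈ admG)
    (lam : ℝ) (hlam : 0 < lam)
    (hcfl : lam * max (alphaMax γ UL) (max (alphaMax γ UM) (alphaMax γ UR)) ≤ 1 / 2) :
    ζ₂ • UM - lam • (Fhllc γ (ζ₂ • UM) (ζ₃ • UR) - Fhllc γ (ζ₁ • UL) (ζ₂ • UM)) ∈ admG := by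
  set M := max (alphaMax γ UL) (max (alphaMax γ UM) (alphaMax γ UR)) with hM
  have hbL : (2 * lam) * alphaMax γ (ζ₁ • UL) ≤ 1 := by
    rw [alphaMax_smul γ hζ₁]
    have h1 : alphaMax γ UL ≤ M := le_max_left _ _
    nlinarith [mul_le_mul_of_nonneg_left h1 hlam.le]
  have hbM : (2 * lam) * alphaMax γ (ζ₂ • UM) ≤ 1 := by
    rw [alphaMax_smul γ hζ₂]
    have h1 : alphaMax γ UM ≤ M := le_trans (le_max_left _ _) (le_max_right _ _)
    nlinarith [mul_le_mul_of_nonneg_left h1 hlam.le]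
  have hbR : (2 * lam) * alphaMax γ (ζ₃ • UR) ≤ 1 := by
    rw [alphaMax_smul γ hζ₃]
    have h1 : alphaMax γ UR ≤ M := le_trans (le_max_right _ _) (le_max_right _ _)
    nlinarith [mul_le_mul_of_nonneg_left h1 hlam.le]
  have hc : (0:ℝ) < 2 * lam := by linarith
  have hA := one_sided_L hγ (admG_smul hζ₂ hUM) (admG_smul hζ₃ hUR) hc hbM hbR
  have hB := one_sided_R hγ (admG_smul hζ₁ hUL) (admG_smul hζ₂ hUM) hc hbL hbM
  have hdec : ζ₂ • UM - lam • (Fhllc γ (ζ₂ • UM) (ζ₃ • UR) - Fhllc γ (ζ₁ • UL) (ζ₂ • UM))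
      = (1/2 : ℝ) • (ζ₂ • UM - (2 * lam) • (Fhllc γ (ζ₂ • UM) (ζ₃ • UR) - eulerF γ (ζ₂ • UM)))
        + (1/2 : ℝ) • (ζ₂ • UM + (2 * lam) • (Fhllc γ (ζ₁ • UL) (ζ₂ • UM) - eulerF γ (ζ₂ • UM))) := by
    module
  rw [hdec]
  exact admG_add (admG_smul one_half_pos hA) (admG_smul one_half_pos hB)
end
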